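/- (Lemma 2 and its Corollary) Let Ω ⊆ (ℂ∖{0})^N be open and connected and let v(β,a) be an analytic solution of equation (GG2) on V × Ω such that v(β,a) ≠ 0 for all (β,a). Then for each i = 1, …, N and each fixed β ∈ V, each of the functions φ(a) = (∂v/∂a_i)(β,a) / v(β − ω^i, a) and ψ(a) = v(β,a) / (a_i · v(β − ω^i, a)) satisfies Σ_{k=1}^N a_k (∂φ/∂a_k)(a) ω^k = 0. Consequently (Corollary), with L = {ℓ ∈ ℂ^N : Σ_j ℓ_j ω^j = 0} and a fixed basis l^1,…,l^r of L (r = N − n), these functions can locally be written as φ_i(β, x(a)) and ψ_i(β, x(a)) respectively, where x(a) = (a^{l^1}, …, a^{l^r}) and a^{l} = a_1^{l_1}⋯a_N^{l_N}. -/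

import Mathlib

set_option maxHeartbeats 2000000
open Complex Filter Topology


lemma lmap_pi_expand {M : Type*} [AddCommGroup M] [Module ℂ M] {N : ℕ}
    (L : (Fin N → ℂ) →ₗ[ℂ] M) (c : Fin N → ℂ) :
    L c = ∑ j, c j • L (Pi.single j 1) := by
  rw [LinearMap.pi_apply_eq_sum_univ]
  refine Finset.sum_congr rfl fun j _ => ?_
  congr 1
  congr 1
  funext k
  simp [Pi.single_apply, eq_comm]

lemma clm_pi_expand {M : Type*} [NormedAddCommGroup M] [NormedSpace ℂ M] {N : ℕ}
    (L : (Fin N → ℂ) →L[ℂ] M) (c : Fin N → ℂ) :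
    L c = ∑ j, c j • L (Pi.single j 1) :=
  lmap_pi_expand (L : (Fin N → ℂ) →ₗ[ℂ] M) c


lemma sum_smul_quot_eq_zero {V : Type*} [NormedAddCommGroup V] [NormedSpace ℂ V]
    {N : ℕ} (ω : Fin N → V) (g h : (Fin N → ℂ) → ℂ) (a : Fin N → ℂ) (γ : V)
    (hg : DifferentiableAt ℂ g a) (hh : DifferentiableAt ℂ h a)
    (hne : ∀ᶠ x in 𝓝 a, h x ≠ 0)
    (Hg : ∑ k, (a k * fderiv ℂ g a (Pi.single k 1)) • ω k = g a • γ)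
    (Hh : ∑ k, (a k * fderiv ℂ h a (Pi.single k 1)) • ω k = h a • γ) :
    ∑ k, (a k * fderiv ℂ (fun x => g x / h x) a (Pi.single k 1)) • ω k = 0 := by
  have hha : h a ≠ 0 := hne.self_of_nhds
  set φ := fun x => g x / h x with hφdef
  have hφd : DifferentiableAt ℂ φ a := by
    simpa [hφdef, div_eq_mul_inv] using hg.fun_mul (hh.fun_inv hha)
  have heq : g =ᶠ[𝓝 a] fun x => φ x * h x := by
    filter_upwards [hne] with x hx
    simp [hφdef, div_mul_cancel₀ _ hx]
  have hDg : fderiv ℂ g a = φ a • fderiv ℂ h a + h a • fderiv ℂ φ a := by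
    rw [heq.fderiv_eq, fderiv_fun_mul hφd hh]
  have key : g a • γ
      = h a • (∑ k, (a k * fderiv ℂ φ a (Pi.single k 1)) • ω k) + φ a • (h a • γ) := by
    rw [← Hg, ← Hh, Finset.smul_sum, Finset.smul_sum, ← Finset.sum_add_distrib]
    refine Finset.sum_congr rfl fun k _ => ?_
    rw [hDg]
    simp only [ContinuousLinearMap.add_apply, ContinuousLinearMap.coe_smul',
      Pi.smul_apply, smul_eq_mul, smul_smul]
    rw [← add_smul]
    ring_nf
  have hgφ : g a = φ a * h a := (div_mul_cancel₀ (g a) hha).symm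
  have hz : h a • (∑ k, (a k * fderiv ℂ φ a (Pi.single k 1)) • ω k) = 0 := by
    have h2 := key
    rw [hgφ, mul_smul, smul_smul, mul_comm (φ a) (h a), ← smul_smul] at h2
    -- h2 : φ a • h a • γ = h a • S + φ a • h a • γ  (roughly)
    exact right_eq_add.mp h2
  rcases smul_eq_zero.mp hz with h0 | h0
  · exact absurd h0 hha
  · exact h0


lemma diff_GG {V : Type*} [NormedAddCommGroup V] [NormedSpace ℂ V]
    {N : ℕ} (ω : Fin N → V) (f : (Fin N → ℂ) → ℂ) (β : V)
    (Ω : Set (Fin N → ℂ)) (hΩ : IsOpen Ω)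
    (hf : AnalyticOnNhd ℂ f Ω)
    (H : ∀ x ∈ Ω, ∑ j, (x j * fderiv ℂ f x (Pi.single j 1)) • ω j = f x • β)
    (i : Fin N) (a : Fin N → ℂ) (ha : a ∈ Ω) :
    ∑ j, (a j * fderiv ℂ (fun x => fderiv ℂ f x (Pi.single i 1)) a (Pi.single j 1)) • ω j
      = fderiv ℂ f a (Pi.single i 1) • (β - ω i) := by
  have hf' : AnalyticOnNhd ℂ (fderiv ℂ f) Ω := hf.fderiv
  have hf'd : DifferentiableAt ℂ (fderiv ℂ f) a := (hf' a ha).differentiableAt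
  have humd : ∀ m : Fin N, DifferentiableAt ℂ (fun x => fderiv ℂ f x (Pi.single m 1)) a :=
    fun m => hf'd.clm_apply (differentiableAt_const _)
  have hum : ∀ m : Fin N, fderiv ℂ (fun x => fderiv ℂ f x (Pi.single m 1)) a
      = (fderiv ℂ (fderiv ℂ f) a).flip (Pi.single m 1) := by
    intro m
    rw [fderiv_clm_apply hf'd (differentiableAt_const _)]
    simp
  have hsym : ∀ vv ww, fderiv ℂ (fderiv ℂ f) a vv ww = fderiv ℂ (fderiv ℂ f) a ww vv :=
    ((hf a ha).contDiffAt (n := 2)).isSymmSndFDerivAt (by simp)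
  have heq : (fun x => ∑ j, (x j * fderiv ℂ f x (Pi.single j 1)) • ω j)
      =ᶠ[𝓝 a] (fun x => f x • β) := by
    filter_upwards [hΩ.mem_nhds ha] with x hx
    exact H x hx
  have hcoord : ∀ j : Fin N, DifferentiableAt ℂ (fun x : Fin N → ℂ => x j) a :=
    fun j => (hasFDerivAt_apply (𝕜 := ℂ) j a).differentiableAt
  have hterm : ∀ j ∈ Finset.univ, DifferentiableAt ℂ
      (fun x => (x j * fderiv ℂ f x (Pi.single j 1)) • ω j) a :=
    fun j _ => DifferentiableAt.smul_const (𝕜 := ℂ) (𝕜' := ℂ) ((hcoord j).mul (humd j)) (ω j)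
  -- equate derivatives
  have hD : fderiv ℂ (fun x => ∑ j, (x j * fderiv ℂ f x (Pi.single j 1)) • ω j) a
      = fderiv ℂ (fun x => f x • β) a := heq.fderiv_eq
  rw [fderiv_fun_sum hterm, fderiv_smul_const (𝕜 := ℂ) (𝕜' := ℂ) (hf a ha).differentiableAt β] at hD
  -- evaluate at Pi.single i 1
  have hDi := congrArg (fun (L : (Fin N → ℂ) →L[ℂ] V) => L (Pi.single i 1)) hD
  simp only [ContinuousLinearMap.sum_apply, ContinuousLinearMap.smulRight_apply] at hDi
  -- rewrite each summand
  have hterm_eq : ∀ j : Fin N,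
      (fderiv ℂ (fun x => (x j * fderiv ℂ f x (Pi.single j 1)) • ω j) a) (Pi.single i 1)
      = (a j * fderiv ℂ (fun x => fderiv ℂ f x (Pi.single i 1)) a (Pi.single j 1)) • ω j
        + ((Pi.single i 1 : Fin N → ℂ) j * fderiv ℂ f a (Pi.single j 1)) • ω j := by
    intro j
    rw [fderiv_smul_const (𝕜 := ℂ) (𝕜' := ℂ) ((hcoord j).fun_mul (humd j)) (ω j)]
    rw [ContinuousLinearMap.smulRight_apply]
    rw [fderiv_fun_mul (hcoord j) (humd j)]
    have hproj : fderiv ℂ (fun x : Fin N → ℂ => x j) a = ContinuousLinearMap.proj j :=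
      (hasFDerivAt_apply (𝕜 := ℂ) j a).fderiv
    simp only [ContinuousLinearMap.add_apply, ContinuousLinearMap.coe_smul',
      Pi.smul_apply, smul_eq_mul, hproj, ContinuousLinearMap.proj_apply]
    rw [hum j, hum i, add_smul]
    congr 2
    · rw [ContinuousLinearMap.flip_apply, ContinuousLinearMap.flip_apply]
      exact congrArg (a j * ·) (hsym (Pi.single i 1) (Pi.single j 1))
    · ring
  rw [Finset.sum_congr rfl (fun j _ => hterm_eq j)] at hDi
  rw [Finset.sum_add_distrib] at hDi
  -- second sum collapses to the i-th term
  have hcollapse : ∑ j, ((Pi.single i 1 : Fin N → ℂ) j * fderiv ℂ f a (Pi.single j 1)) • ω j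
      = fderiv ℂ f a (Pi.single i 1) • ω i := by
    rw [Finset.sum_eq_single i]
    · simp
    · intro b _ hb
      simp [Pi.single_apply, Ne.symm hb]
    · simp
  rw [hcollapse] at hDi
  rw [smul_sub]
  rw [eq_sub_iff_add_eq]
  exact hDi


lemma mul_coord_GG {V : Type*} [NormedAddCommGroup V] [NormedSpace ℂ V]
    {N : ℕ} (ω : Fin N → V) (w : (Fin N → ℂ) → ℂ) (a : Fin N → ℂ) (γ : V) (i : Fin N)
    (hw : DifferentiableAt ℂ w a)
    (Hw : ∑ k, (a k * fderiv ℂ w a (Pi.single k 1)) • ω k = w a • γ) :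
    ∑ k, (a k * fderiv ℂ (fun x => x i * w x) a (Pi.single k 1)) • ω k
      = (a i * w a) • (γ + ω i) := by
  have hcoord : DifferentiableAt ℂ (fun x : Fin N → ℂ => x i) a :=
    (hasFDerivAt_apply (𝕜 := ℂ) i a).differentiableAt
  have hproj : fderiv ℂ (fun x : Fin N → ℂ => x i) a = ContinuousLinearMap.proj i :=
    (hasFDerivAt_apply (𝕜 := ℂ) i a).fderiv
  have hterm : ∀ k : Fin N, (a k * fderiv ℂ (fun x => x i * w x) a (Pi.single k 1)) • ω k
      = (a i * (a k * fderiv ℂ w a (Pi.single k 1))) • ω k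
        + (a k * w a * (if i = k then 1 else 0)) • ω k := by
    intro k
    rw [fderiv_fun_mul hcoord hw]
    simp only [ContinuousLinearMap.add_apply, ContinuousLinearMap.coe_smul',
      Pi.smul_apply, smul_eq_mul, hproj, ContinuousLinearMap.proj_apply, Pi.single_apply]
    rw [← add_smul]
    congr 1
    ring
  rw [Finset.sum_congr rfl (fun k _ => hterm k), Finset.sum_add_distrib]
  have h1 : ∑ k, (a i * (a k * fderiv ℂ w a (Pi.single k 1))) • ω k
      = a i • (w a • γ) := by
    rw [← Hw, Finset.smul_sum]
    exact Finset.sum_congr rfl fun k _ => (smul_smul _ _ _).symm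
  have h2 : ∑ k, (a k * w a * (if i = k then 1 else 0)) • ω k = (a i * w a) • ω i := by
    rw [Finset.sum_eq_single i]
    · simp
    · intro b _ hb
      simp [Ne.symm hb]
    · simp
  rw [h1, h2, smul_smul, smul_add]

lemma fiber_const {V : Type*} [NormedAddCommGroup V] [NormedSpace ℂ V]
    {N r : ℕ} (ω : Fin N → V)
    (π : (Fin N → ℂ) →ₗ[ℂ] V) (hπ : ∀ j, π (Pi.single j 1) = ω j)
    (l : Fin r → Fin N → ℂ)
    (hlspan : Submodule.span ℂ (Set.range l) = LinearMap.ker π)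
    (Ω : Set (Fin N → ℂ)) (hΩ0 : ∀ a ∈ Ω, ∀ j, a j ≠ 0)
    (a0 : Fin N → ℂ) (ha0 : ∀ j, a0 j ≠ 0) (δ ε : ℝ)
    (hδpos : 0 < δ) (hδΩ : Metric.ball a0 δ ⊆ Ω)
    (hεpos : 0 < ε) (hε1 : ε ≤ 1) (hεπ : ε ≤ Real.pi / 2) (hεδ : 2 * ‖a0‖ * ε < δ)
    (φ : (Fin N → ℂ) → ℂ)
    (hφd : ∀ x ∈ Ω, DifferentiableAt ℂ φ x)
    (hφ0 : ∀ x ∈ Ω, ∑ k, (x k * fderiv ℂ φ x (Pi.single k 1)) • ω k = 0)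
    (a a' : Fin N → ℂ)
    (haΩ : a ∈ Metric.ball a0 δ) (ha'Ω : a' ∈ Metric.ball a0 δ)
    (haT : ∀ j, ‖Complex.log (a j / a0 j)‖ < ε)
    (ha'T : ∀ j, ‖Complex.log (a' j / a0 j)‖ < ε)
    (hd0 : ∀ k, ∑ j, l k j * (Complex.log (a' j / a0 j) - Complex.log (a j / a0 j)) = 0) :
    φ a = φ a' := by
  set t : Fin N → ℂ := fun j => Complex.log (a j / a0 j) with ht
  set t' : Fin N → ℂ := fun j => Complex.log (a' j / a0 j) with ht'
  set d : Fin N → ℂ := fun j => t' j - t j with hd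
  -- the path
  set P : ℝ → Fin N → ℂ := fun s j => a0 j * Complex.exp (t j + (s : ℂ) * d j) with hP
  have hP0 : P 0 = a := by
    funext j
    have : Complex.exp (t j) = a j / a0 j :=
      Complex.exp_log (div_ne_zero (hΩ0 a (hδΩ haΩ) j) (ha0 j))
    simp only [hP, Complex.ofReal_zero, zero_mul, add_zero, this]
    exact mul_div_cancel₀ (a j) (ha0 j) ▸ by rw [mul_comm, div_mul_cancel₀ _ (ha0 j)]
  have hP1 : P 1 = a' := by
    funext j
    have h1 : t j + (1 : ℂ) * d j = t' j := by simp [hd]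
    have : Complex.exp (t' j) = a' j / a0 j :=
      Complex.exp_log (div_ne_zero (hΩ0 a' (hδΩ ha'Ω) j) (ha0 j))
    simp only [hP, Complex.ofReal_one, h1, this]
    rw [mul_comm, div_mul_cancel₀ _ (ha0 j)]
  -- bounds along the path
  have hzbound : ∀ s : ℝ, s ∈ Set.Icc (0:ℝ) 1 → ∀ j,
      ‖t j + (s : ℂ) * d j‖ < ε := by
    intro s hs j
    have hrw : t j + (s : ℂ) * d j = (1 - (s : ℂ)) * t j + (s : ℂ) * t' j := by
      simp only [hd]; ring
    rw [hrw]
    have h1 : ‖(1 - (s : ℂ)) * t j + (s : ℂ) * t' j‖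
        ≤ (1 - s) * ‖t j‖ + s * ‖t' j‖ := by
      refine (norm_add_le _ _).trans ?_
      rw [norm_mul, norm_mul]
      have e1 : ‖1 - (s : ℂ)‖ = 1 - s := by
        rw [show (1 : ℂ) - (s : ℂ) = ((1 - s : ℝ) : ℂ) by push_cast; ring,
          Complex.norm_real, Real.norm_eq_abs, _root_.abs_of_nonneg (by linarith [hs.2])]
      have e2 : ‖(s : ℂ)‖ = s := by
        rw [Complex.norm_real, Real.norm_eq_abs, _root_.abs_of_nonneg hs.1]
      rw [e1, e2]
    refine lt_of_le_of_lt h1 ?_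
    have hA := haT j
    have hB := ha'T j
    have h2 : (1 - s) * ‖t j‖ + s * ‖t' j‖
        ≤ max (‖t j‖) (‖t' j‖) := by
      rcases le_total (‖t j‖) (‖t' j‖) with h | h
      · rw [max_eq_right h]; nlinarith [hs.1, hs.2]
      · rw [max_eq_left h]; nlinarith [hs.1, hs.2]
    exact lt_of_le_of_lt h2 (max_lt hA hB)
  have hPball : ∀ s : ℝ, s ∈ Set.Icc (0:ℝ) 1 → P s ∈ Metric.ball a0 δ := by
    intro s hs
    rw [Metric.mem_ball, dist_pi_lt_iff hδpos]
    intro j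
    have hz := hzbound s hs j
    rw [Complex.dist_eq]
    have : P s j - a0 j = a0 j * (Complex.exp (t j + (s : ℂ) * d j) - 1) := by
      simp only [hP]; ring
    rw [this, norm_mul]
    have hb : ‖Complex.exp (t j + (s : ℂ) * d j) - 1‖
        ≤ 2 * ‖t j + (s : ℂ) * d j‖ :=
      Complex.norm_exp_sub_one_le (le_trans hz.le hε1)
    have ha0n : ‖a0 j‖ ≤ ‖a0‖ := by
      exact norm_le_pi_norm a0 j
    calc ‖a0 j‖ * ‖Complex.exp (t j + (s : ℂ) * d j) - 1‖
        ≤ ‖a0‖ * (2 * ε) := by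
          apply mul_le_mul ha0n (hb.trans (by nlinarith)) (norm_nonneg _) (norm_nonneg _)
      _ < δ := by nlinarith [norm_nonneg a0]
  have hPΩ : ∀ s : ℝ, s ∈ Set.Icc (0:ℝ) 1 → P s ∈ Ω := fun s hs => hδΩ (hPball s hs)
  -- derivative of the path
  have hPderiv : ∀ s : ℝ, HasDerivAt P (fun j => P s j * d j) s := by
    intro s
    rw [hasDerivAt_pi]
    intro j
    have h1 : HasDerivAt (fun s : ℝ => (s : ℂ)) 1 s := by
      exact Complex.ofRealCLM.hasDerivAt
    have h2 := (h1.mul_const (d j)).const_add (t j)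
    have h3 := h2.cexp
    have h4 := h3.const_mul (a0 j)
    refine h4.congr_deriv ?_
    simp only [hP]
    ring
  -- chain rule and vanishing of the derivative
  have hchain : ∀ s : ℝ, s ∈ Set.Icc (0:ℝ) 1 → HasDerivAt (fun s => φ (P s)) 0 s := by
    intro s hs
    have hmem := hPΩ s hs
    have hfd := ((hφd _ hmem).hasFDerivAt.restrictScalars ℝ)
    have hch := hfd.comp_hasDerivAt s (hPderiv s)
    have hval : fderiv ℂ φ (P s) (fun j => P s j * d j) = 0 := by
      rw [clm_pi_expand (fderiv ℂ φ (P s)) (fun j => P s j * d j)]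
      -- the coefficient vector is in ker π = span of the l's
      set c : Fin N → ℂ := fun k => P s k * fderiv ℂ φ (P s) (Pi.single k 1) with hc
      have hπc : π c = 0 := by
        rw [lmap_pi_expand π c]
        have : ∀ j, c j • π (Pi.single j 1) = (P s j * fderiv ℂ φ (P s) (Pi.single j 1)) • ω j := by
          intro j; rw [hπ j]
        rw [Finset.sum_congr rfl fun j _ => this j]
        exact hφ0 (P s) hmem
      have hcspan : c ∈ Submodule.span ℂ (Set.range l) := by
        rw [hlspan]; exact LinearMap.mem_ker.mpr hπc
      -- linear functional pairing with d
      set D : (Fin N → ℂ) →ₗ[ℂ] ℂ := ∑ j, d j • LinearMap.proj j with hD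
      have hDapp : ∀ u : Fin N → ℂ, D u = ∑ j, d j * u j := by
        intro u
        simp [hD, LinearMap.sum_apply, LinearMap.smul_apply, smul_eq_mul]
      have hDl : ∀ k, D (l k) = 0 := by
        intro k
        rw [hDapp]
        rw [← hd0 k]
        refine Finset.sum_congr rfl fun j _ => ?_
        simp only [hd]; ring
      have hDc : D c = 0 := by
        have hle : Submodule.span ℂ (Set.range l) ≤ LinearMap.ker D := by
          rw [Submodule.span_le]
          rintro _ ⟨k, rfl⟩
          exact LinearMap.mem_ker.mpr (hDl k)
        exact LinearMap.mem_ker.mp (hle hcspan)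
      rw [hDapp] at hDc
      calc ∑ j, (P s j * d j) • fderiv ℂ φ (P s) (Pi.single j 1)
          = ∑ j, d j * (P s j * fderiv ℂ φ (P s) (Pi.single j 1)) := by
            refine Finset.sum_congr rfl fun j _ => ?_
            rw [smul_eq_mul]; ring
        _ = 0 := hDc
    have : (fderiv ℂ φ (P s)).restrictScalars ℝ (fun j => P s j * d j) = 0 := by
      rw [ContinuousLinearMap.coe_restrictScalars']
      exact hval
    rwa [this] at hch
  -- conclude by constancy
  have hcont : ContinuousOn (fun s => φ (P s)) (Set.Icc 0 1) :=
    fun s hs => ((hchain s hs).continuousAt).continuousWithinAt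
  have hconst := constant_of_has_deriv_right_zero hcont
    (fun s hs => ((hchain s (Set.Ico_subset_Icc_self hs)).hasDerivWithinAt))
  have h10 := hconst 1 (Set.right_mem_Icc.mpr zero_le_one)
  rw [hP0, hP1] at h10
  exact h10.symm

/-- Lemma 2 and its Corollary: if `v(β,a)` is an analytic nowhere-vanishing solution of
(GG2) on `V × Ω` (`Ω ⊆ (ℂ∖{0})^N` open connected), then for each `i` and each fixed `β` the
functions `φ(a) = (∂v/∂a_i)(β,a)/v(β-ω^i,a)` and `ψ(a) = v(β,a)/(a_i v(β-ω^i,a))` satisfy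
`∑_k a_k (∂φ/∂a_k) • ω^k = 0`; consequently, near any point of `Ω` they can be written as
`φ_i(β, x(a))` and `ψ_i(β, x(a))` where `x(a) = (a^{l^1},…,a^{l^r})` for a fixed basis
`l^1,…,l^r` of `L = {ℓ : ∑_j ℓ_j ω^j = 0}` (branches taken via analytic logarithms). -/
theorem stmt6 {V : Type*} [NormedAddCommGroup V] [NormedSpace ℂ V] [FiniteDimensional ℂ V]
    {N r : ℕ} (ω : Fin N → V)
    (hspan : Submodule.span ℂ (Set.range ω) = ⊤)
    (hr : r = N - Module.finrank ℂ V)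
    (π : (Fin N → ℂ) →ₗ[ℂ] V) (hπ : ∀ j, π (Pi.single j 1) = ω j)
    (l : Fin r → Fin N → ℂ)
    (hlind : LinearIndependent ℂ l)
    (hlspan : Submodule.span ℂ (Set.range l) = LinearMap.ker π)
    (Ω : Set (Fin N → ℂ)) (hΩopen : IsOpen Ω) (hΩconn : IsConnected Ω)
    (hΩ0 : ∀ a ∈ Ω, ∀ j, a j ≠ 0)
    (v : V → (Fin N → ℂ) → ℂ)
    (hv : AnalyticOnNhd ℂ (fun p : V × (Fin N → ℂ) => v p.1 p.2) (Set.univ ×ˢ Ω))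
    (hvne : ∀ (β : V), ∀ a ∈ Ω, v β a ≠ 0)
    (hvGG2 : ∀ (β : V), ∀ a ∈ Ω,
      ∑ j, (a j * fderiv ℂ (v β) a (Pi.single j 1)) • ω j = v β a • β) :
    (∀ (i : Fin N) (β : V), ∀ a ∈ Ω,
      ∑ k, (a k * fderiv ℂ
          (fun a' => fderiv ℂ (v β) a' (Pi.single i 1) / v (β - ω i) a') a
          (Pi.single k 1)) • ω k = 0) ∧
    (∀ (i : Fin N) (β : V), ∀ a ∈ Ω,
      ∑ k, (a k * fderiv ℂ
          (fun a' => v β a' / (a' i * v (β - ω i) a')) a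
          (Pi.single k 1)) • ω k = 0) ∧
    (∀ a0 ∈ Ω, ∃ Ω' ⊆ Ω, IsOpen Ω' ∧ a0 ∈ Ω' ∧
      ∃ Log : Fin N → (Fin N → ℂ) → ℂ,
        (∀ j, AnalyticOnNhd ℂ (Log j) Ω') ∧
        (∀ j, ∀ a ∈ Ω', Complex.exp (Log j a) = a j) ∧
        ∃ Φ Ψ : Fin N → V → (Fin r → ℂ) → ℂ,
          ∀ (i : Fin N) (β : V), ∀ a ∈ Ω',
            fderiv ℂ (v β) a (Pi.single i 1) / v (β - ω i) a
              = Φ i β (fun k => Complex.exp (∑ j, l k j * Log j a)) ∧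
            v β a / (a i * v (β - ω i) a)
              = Ψ i β (fun k => Complex.exp (∑ j, l k j * Log j a))) := by
  classical
  -- restriction of v to fixed β is analytic on Ω
  have hvβ : ∀ β : V, AnalyticOnNhd ℂ (v β) Ω := by
    intro β a ha
    have h1 : AnalyticAt ℂ (fun p : V × (Fin N → ℂ) => v p.1 p.2) (β, a) :=
      hv (β, a) ⟨Set.mem_univ _, ha⟩
    have h2 : AnalyticAt ℂ (fun a : Fin N → ℂ => ((β, a) : V × (Fin N → ℂ))) a :=
      analyticAt_const.prod analyticAt_id
    exact h1.comp h2
  have hud : ∀ (β : V) (i : Fin N), ∀ a ∈ Ω,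
      DifferentiableAt ℂ (fun x => fderiv ℂ (v β) x (Pi.single i 1)) a := by
    intro β i a ha
    exact ((hvβ β).fderiv a ha).differentiableAt.clm_apply (differentiableAt_const _)
  -- Part 1
  have part1 : ∀ (i : Fin N) (β : V), ∀ a ∈ Ω,
      ∑ k, (a k * fderiv ℂ
          (fun a' => fderiv ℂ (v β) a' (Pi.single i 1) / v (β - ω i) a') a
          (Pi.single k 1)) • ω k = 0 := by
    intro i β a ha
    refine sum_smul_quot_eq_zero ω _ _ a (β - ω i) (hud β i a ha)
      ((hvβ (β - ω i) a ha).differentiableAt) ?_ ?_ (hvGG2 (β - ω i) a ha)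
    · filter_upwards [hΩopen.mem_nhds ha] with x hx
      exact hvne (β - ω i) x hx
    · exact diff_GG ω (v β) β Ω hΩopen (hvβ β) (hvGG2 β) i a ha
  -- Part 2
  have part2 : ∀ (i : Fin N) (β : V), ∀ a ∈ Ω,
      ∑ k, (a k * fderiv ℂ
          (fun a' => v β a' / (a' i * v (β - ω i) a')) a
          (Pi.single k 1)) • ω k = 0 := by
    intro i β a ha
    refine sum_smul_quot_eq_zero ω _ _ a β ((hvβ β a ha).differentiableAt)
      (((hasFDerivAt_apply (𝕜 := ℂ) i a).differentiableAt).mul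
        ((hvβ (β - ω i) a ha).differentiableAt)) ?_ (hvGG2 β a ha) ?_
    · filter_upwards [hΩopen.mem_nhds ha] with x hx
      exact mul_ne_zero (hΩ0 x hx i) (hvne (β - ω i) x hx)
    · have := mul_coord_GG ω (v (β - ω i)) a (β - ω i) i
        ((hvβ (β - ω i) a ha).differentiableAt) (hvGG2 (β - ω i) a ha)
      rwa [sub_add_cancel] at this

  refine ⟨part1, part2, ?_⟩
  intro a0 ha0Ω
  have ha0 : ∀ j, a0 j ≠ 0 := hΩ0 a0 ha0Ω
  obtain ⟨δ, hδpos, hδΩ⟩ : ∃ δ > 0, Metric.ball a0 δ ⊆ Ω :=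
    Metric.isOpen_iff.mp hΩopen a0 ha0Ω
  set C : ℝ := ∑ k, ∑ j, ‖l k j‖ with hCdef
  have hC0 : 0 ≤ C :=
    Finset.sum_nonneg fun k _ => Finset.sum_nonneg fun j _ => norm_nonneg _
  have hCrow : ∀ k, ∑ j, ‖l k j‖ ≤ C :=
    fun k => Finset.single_le_sum (f := fun k => ∑ j, ‖l k j‖)
      (fun k _ => Finset.sum_nonneg fun j _ => norm_nonneg _) (Finset.mem_univ k)
  set ε : ℝ := min (min 1 (δ / (2 * ‖a0‖ + 1))) (Real.pi / (2 * (C + 1))) with hεdef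
  have hεpos : 0 < ε := lt_min (lt_min one_pos (by positivity)) (by positivity)
  have hε1 : ε ≤ 1 := le_trans (min_le_left _ _) (min_le_left _ _)
  have hεδ' : ε ≤ δ / (2 * ‖a0‖ + 1) := le_trans (min_le_left _ _) (min_le_right _ _)
  have hεC' : ε ≤ Real.pi / (2 * (C + 1)) := min_le_right _ _
  have hεδ : 2 * ‖a0‖ * ε < δ := by
    have h1 : 2 * ‖a0‖ * ε ≤ 2 * ‖a0‖ * (δ / (2 * ‖a0‖ + 1)) :=
      mul_le_mul_of_nonneg_left hεδ' (by positivity)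
    have h2 : 2 * ‖a0‖ * (δ / (2 * ‖a0‖ + 1)) < δ := by
      rw [← mul_div_assoc, div_lt_iff₀ (by positivity)]
      nlinarith [norm_nonneg a0, hδpos]
    linarith
  have hεπ : ε ≤ Real.pi / 2 := by
    refine hεC'.trans ?_
    rw [div_le_div_iff₀ (by positivity) (by norm_num)]
    nlinarith [Real.pi_pos]
  have hεC : C * ε < Real.pi := by
    have h1 : C * ε ≤ C * (Real.pi / (2 * (C + 1))) := mul_le_mul_of_nonneg_left hεC' hC0
    have h2 : C * (Real.pi / (2 * (C + 1))) < Real.pi := by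
      rw [← mul_div_assoc, div_lt_iff₀ (by positivity)]
      nlinarith [Real.pi_pos]
    linarith
  -- the neighborhood
  set Ω' : Set (Fin N → ℂ) := Metric.ball a0 δ ∩
    ⋂ j, {x : Fin N → ℂ | 0 < (x j / a0 j).re ∧
      ‖Complex.log (x j / a0 j)‖ < ε} with hΩ'def
  have hΩ'Ω : Ω' ⊆ Ω := fun x hx => hδΩ hx.1
  have hopen : IsOpen Ω' := by
    refine Metric.isOpen_ball.inter (isOpen_iInter_of_finite fun j => ?_)
    have hU : IsOpen {x : Fin N → ℂ | 0 < (x j / a0 j).re} :=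
      isOpen_lt continuous_const (Complex.continuous_re.comp ((continuous_apply j).div_const _))
    have hcont : ContinuousOn (fun x : Fin N → ℂ => Complex.log (x j / a0 j))
        {x : Fin N → ℂ | 0 < (x j / a0 j).re} := by
      intro x hx
      exact (ContinuousAt.continuousWithinAt
        (ContinuousAt.comp (g := Complex.log) (f := fun y : Fin N → ℂ => y j / a0 j)
          (continuousAt_clog (Complex.mem_slitPlane_iff.mpr (Or.inl hx)))
          ((continuous_apply j).div_const _).continuousAt))
    have hset : {x : Fin N → ℂ | 0 < (x j / a0 j).re ∧
        ‖Complex.log (x j / a0 j)‖ < ε}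
        = {x : Fin N → ℂ | 0 < (x j / a0 j).re} ∩
          (fun x : Fin N → ℂ => Complex.log (x j / a0 j)) ⁻¹' (Metric.ball 0 ε) := by
      ext x
      simp [Metric.mem_ball, Complex.dist_eq]
    rw [hset]
    exact hcont.isOpen_inter_preimage hU Metric.isOpen_ball
  have ha0mem : a0 ∈ Ω' := by
    refine ⟨Metric.mem_ball_self hδpos, Set.mem_iInter.mpr fun j => ⟨?_, ?_⟩⟩
    · rw [div_self (ha0 j)]; norm_num
    · rw [div_self (ha0 j), Complex.log_one, norm_zero]; exact hεpos
  have hmem' : ∀ x ∈ Ω', x ∈ Metric.ball a0 δ ∧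
      ∀ j, ‖Complex.log (x j / a0 j)‖ < ε :=
    fun x hx => ⟨hx.1, fun j => (Set.mem_iInter.mp hx.2 j).2⟩
  -- the logarithms
  set Lg : Fin N → (Fin N → ℂ) → ℂ :=
    fun j x => Complex.log (a0 j) + Complex.log (x j / a0 j) with hLgdef
  have hLgexp : ∀ j, ∀ x ∈ Ω', Complex.exp (Lg j x) = x j := by
    intro j x hx
    have hxj : x j ≠ 0 := hΩ0 x (hΩ'Ω hx) j
    simp only [hLgdef, Complex.exp_add, Complex.exp_log (ha0 j),
      Complex.exp_log (div_ne_zero hxj (ha0 j))]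
    rw [mul_comm, div_mul_cancel₀ _ (ha0 j)]
  have hLgan : ∀ j, AnalyticOnNhd ℂ (Lg j) Ω' := by
    intro j x hx
    have hre : 0 < (x j / a0 j).re := (Set.mem_iInter.mp hx.2 j).1
    have h1 : AnalyticAt ℂ (fun y : Fin N → ℂ => y j) x :=
      (ContinuousLinearMap.proj j : (Fin N → ℂ) →L[ℂ] ℂ).analyticAt x
    have h2 : AnalyticAt ℂ (fun y : Fin N → ℂ => y j / a0 j) x :=
      h1.div analyticAt_const (ha0 j)
    exact analyticAt_const.add
      (h2.clog (Complex.mem_slitPlane_iff.mpr (Or.inl hre)))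
  -- step 1 : equal exponentials give vanishing pairings
  have hstep1 : ∀ a ∈ Ω', ∀ b ∈ Ω',
      (∀ k, Complex.exp (∑ j, l k j * Lg j a) = Complex.exp (∑ j, l k j * Lg j b)) →
      ∀ k, ∑ j, l k j * (Complex.log (b j / a0 j) - Complex.log (a j / a0 j)) = 0 := by
    intro a ha b hb hxx k
    obtain ⟨n, hn⟩ := Complex.exp_eq_exp_iff_exists_int.mp (hxx k)
    have hzform : ∑ j, l k j * (Complex.log (b j / a0 j) - Complex.log (a j / a0 j))
        = -((n : ℂ) * (2 * Real.pi * Complex.I)) := by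
      have h1 : ∑ j, l k j * (Complex.log (b j / a0 j) - Complex.log (a j / a0 j))
          = (∑ j, l k j * Lg j b) - (∑ j, l k j * Lg j a) := by
        rw [← Finset.sum_sub_distrib]
        refine Finset.sum_congr rfl fun j _ => ?_
        simp only [hLgdef]; ring
      rw [h1, hn]; ring
    have habs : ‖∑ j, l k j *
        (Complex.log (b j / a0 j) - Complex.log (a j / a0 j))‖ < 2 * Real.pi := by
      calc ‖∑ j, l k j * (Complex.log (b j / a0 j) - Complex.log (a j / a0 j))‖
          ≤ ∑ j, ‖l k j * (Complex.log (b j / a0 j) - Complex.log (a j / a0 j))‖ :=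
            norm_sum_le _ _
        _ ≤ ∑ j, ‖l k j‖ * (2 * ε) := by
            refine Finset.sum_le_sum fun j _ => ?_
            rw [norm_mul]
            refine mul_le_mul_of_nonneg_left ?_ (norm_nonneg _)
            have h2 := (hmem' a ha).2 j
            have h3 := (hmem' b hb).2 j
            have h4 := norm_sub_le (Complex.log (b j / a0 j)) (Complex.log (a j / a0 j))
            linarith
        _ = (∑ j, ‖l k j‖) * (2 * ε) := (Finset.sum_mul _ _ _).symm
        _ ≤ C * (2 * ε) := mul_le_mul_of_nonneg_right (hCrow k) (by positivity)
        _ < 2 * Real.pi := by nlinarith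
    rw [hzform] at habs
    have habs2 : |(n : ℝ)| * (2 * Real.pi) < 2 * Real.pi := by
      have e : ‖-((n : ℂ) * (2 * Real.pi * Complex.I))‖
          = |(n : ℝ)| * (2 * Real.pi) := by
        rw [norm_neg, norm_mul, Complex.norm_intCast]
        congr 1
        simp [Complex.norm_I, Complex.norm_real, _root_.abs_of_nonneg Real.pi_pos.le]
      rwa [e] at habs
    have hn0 : n = 0 := by
      by_contra h
      have h1 : (1 : ℝ) ≤ |(n : ℝ)| := by
        rw [← Int.cast_abs]
        exact_mod_cast Int.one_le_abs (by omega)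
      nlinarith [Real.pi_pos]
    rw [hzform, hn0]
    simp
  -- assemble the corollary data
  refine ⟨Ω', hΩ'Ω, hopen, ha0mem, Lg, hLgan, hLgexp,
    (fun i β x => if h : ∃ b, b ∈ Ω' ∧
        (fun k => Complex.exp (∑ j, l k j * Lg j b)) = x then
      fderiv ℂ (v β) h.choose (Pi.single i 1) / v (β - ω i) h.choose else 0),
    (fun i β x => if h : ∃ b, b ∈ Ω' ∧
        (fun k => Complex.exp (∑ j, l k j * Lg j b)) = x then
      v β h.choose / (h.choose i * v (β - ω i) h.choose) else 0), ?_⟩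
  intro i β a ha
  have hex : ∃ b, b ∈ Ω' ∧ (fun k => Complex.exp (∑ j, l k j * Lg j b))
      = (fun k => Complex.exp (∑ j, l k j * Lg j a)) := ⟨a, ha, rfl⟩
  obtain ⟨hb1, hb2⟩ := hex.choose_spec
  have hxx : ∀ k, Complex.exp (∑ j, l k j * Lg j a)
      = Complex.exp (∑ j, l k j * Lg j hex.choose) := fun k => (congrFun hb2 k).symm
  have hd0 := hstep1 a ha hex.choose hb1 hxx
  constructor
  · beta_reduce
    rw [dif_pos hex]
    refine fiber_const ω π hπ l hlspan Ω hΩ0 a0 ha0 δ ε hδpos hδΩ hεpos hε1 hεπ hεδ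
      (fun x => fderiv ℂ (v β) x (Pi.single i 1) / v (β - ω i) x) ?_ (part1 i β)
      a hex.choose (hmem' a ha).1 (hmem' hex.choose hb1).1
      (hmem' a ha).2 (hmem' hex.choose hb1).2 hd0
    intro x hx
    have h1 := hud β i x hx
    have h2 := ((hvβ (β - ω i) x hx).differentiableAt).fun_inv (hvne (β - ω i) x hx)
    simpa [div_eq_mul_inv] using h1.fun_mul h2
  · beta_reduce
    rw [dif_pos hex]
    refine fiber_const ω π hπ l hlspan Ω hΩ0 a0 ha0 δ ε hδpos hδΩ hεpos hε1 hεπ hεδ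
      (fun x => v β x / (x i * v (β - ω i) x)) ?_ (part2 i β)
      a hex.choose (hmem' a ha).1 (hmem' hex.choose hb1).1
      (hmem' a ha).2 (hmem' hex.choose hb1).2 hd0
    intro x hx
    have h1 := (hvβ β x hx).differentiableAt
    have hprod : DifferentiableAt ℂ (fun y : Fin N → ℂ => y i * v (β - ω i) y) x :=
      ((hasFDerivAt_apply (𝕜 := ℂ) i x).differentiableAt).mul
        ((hvβ (β - ω i) x hx).differentiableAt)
    have h2 := hprod.fun_inv (mul_ne_zero (hΩ0 x hx i) (hvne (β - ω i) x hx))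
    simpa [div_eq_mul_inv] using h1.fun_mul h2
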